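/- Let Ω ⊂ ℝⁿ be a bounded open set, T > 0, m ≥ 3, k > 0. Let u₀, v₀ : closure(Ω) → ℝ be continuous with u₀ ≥ 0, v₀ ≥ 0 and u₀ v₀ ≡ 0, and let δ > ‖v₀‖_{C(closure(Ω))} e^{−1}. Let u̲ : closure(Ω) × [0,T] → ℝ be continuous, C² in x and C¹ in t on Ω × (0,T] with t ↦ u̲(x,t) of class C¹ on [0,T] for each x ∈ Ω, and suppose: ∂ₜ u̲ = Δ u̲ in Ω × (0,T]; u̲(x,t) = 0 for x ∈ ∂Ω; 0 ≤ u̲(x,0) ≤ min{u₀(x),1} for x ∈ Ω; 0 ≤ u̲ ≤ 1; u̲ > 0 in Ω × (0,T]; and 2 ∂ₜ u̲(x,t) ≤ 1 for all x ∈ Ω, t ∈ [0,T]. Let u : closure(Ω) × [0,T] → ℝ be continuous with 0 ≤ u ≤ ‖u₀‖_{C(closure(Ω))}, C² in x and C¹ in t on Ω × (0,T], and suppose u satisfies ∂ₜ u(x,t) = Δ u(x,t) − k v₀(x) u(x,t)^m exp(−k ∫₀ᵗ u(x,τ) dτ) in Ω × (0,T], u(x,t) = 0 for x ∈ ∂Ω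 and t ∈ (0,T], and u(·,0) = u₀. Then u(x,t) ≥ e^{−δt} u̲(x,t) for all (x,t) ∈ closure(Ω) × [0,T]. -/

import Mathlib

open Set Filter

/-- The Laplacian of `f : ℝⁿ → ℝ` at `x`: the sum of the second partial
derivatives in the coordinate directions. -/
noncomputable def laplacian {n : ℕ} (f : EuclideanSpace ℝ (Fin n) → ℝ)
    (x : EuclideanSpace ℝ (Fin n)) : ℝ :=
  ∑ i : Fin n, iteratedFDeriv ℝ 2 f x ![EuclideanSpace.single i 1, EuclideanSpace.single i 1]

/-- The supremum norm of `f` on the set `s`. -/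
noncomputable def supNorm {n : ℕ} (f : EuclideanSpace ℝ (Fin n) → ℝ)
    (s : Set (EuclideanSpace ℝ (Fin n))) : ℝ :=
  sSup ((fun x => |f x|) '' s)

/-- 1-d second derivative test at an interior minimum. -/
lemma second_test {g g' : ℝ → ℝ} {G r : ℝ} (hr : 0 < r)
    (hg' : ∀ s ∈ Set.Ioo (-r) r, HasDerivAt g (g' s) s)
    (hg'' : HasDerivAt g' G 0)
    (hmin : ∀ s ∈ Set.Ioo (-r) r, g 0 ≤ g s) : 0 ≤ G := by
  by_contra hG
  push_neg at hG
  have h0 : (0:ℝ) ∈ Set.Ioo (-r) r := by constructor <;> nlinarith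
  have hloc : IsLocalMin g 0 := by
    have : Set.Ioo (-r) r ∈ nhds (0:ℝ) := (isOpen_Ioo).mem_nhds h0
    exact Filter.eventually_of_mem this hmin
  have hg'0 : g' 0 = 0 := hloc.hasDerivAt_eq_zero (hg' 0 h0)
  have hslope := hasDerivAt_iff_tendsto_slope.1 hg''
  have hev : ∀ᶠ s in nhdsWithin (0:ℝ) {(0:ℝ)}ᶜ, slope g' 0 s < 0 :=
    hslope (Iio_mem_nhds hG)
  rw [eventually_nhdsWithin_iff] at hev
  rcases Metric.eventually_nhds_iff.1 hev with ⟨ε, hε, hball⟩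
  set s₀ := min (ε/2) (r/2) with hs₀
  have hs₀pos : 0 < s₀ := lt_min (by linarith) (by linarith)
  have hs₀ε : s₀ < ε := lt_of_le_of_lt (min_le_left _ _) (by linarith)
  have hs₀r : s₀ < r := lt_of_le_of_lt (min_le_right _ _) (by linarith)
  have hneg : ∀ c ∈ Set.Ioo 0 s₀, g' c < 0 := by
    intro c hc
    have hcball : dist c (0:ℝ) < ε := by
      rw [Real.dist_eq, sub_zero, abs_of_pos hc.1]; linarith [hc.2]
    have hcne : c ∈ ({(0:ℝ)}ᶜ : Set ℝ) := by
      simp [ne_of_gt hc.1]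
    have := hball hcball hcne
    rw [slope_def_field] at this
    simp only [hg'0, sub_zero] at this
    have hcpos := hc.1
    rw [div_neg_iff] at this
    rcases this with ⟨h1, h2⟩ | ⟨h1, h2⟩
    · linarith
    · exact h1
  have hcontOn : ContinuousOn g (Set.Icc 0 s₀) := by
    intro c hc
    have hcI : c ∈ Set.Ioo (-r) r := ⟨by linarith [hc.1], by linarith [hc.2]⟩
    exact ((hg' c hcI).continuousAt).continuousWithinAt
  have hderOn : ∀ c ∈ Set.Ioo 0 s₀, HasDerivAt g (g' c) c := fun c hc =>
    hg' c ⟨by linarith [hc.1], by linarith [hc.2]⟩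
  obtain ⟨c, hcmem, hceq⟩ := exists_hasDerivAt_eq_slope g g' hs₀pos hcontOn hderOn
  have hge : 0 ≤ (g s₀ - g 0) / (s₀ - 0) := by
    apply div_nonneg _ (by linarith)
    have := hmin s₀ ⟨by linarith, hs₀r⟩
    linarith
  rw [← hceq] at hge
  exact absurd (hneg c hcmem) (by linarith)

/-- Directional second derivative is nonnegative at an interior minimum of a C² function. -/
lemma dir_second_nonneg {n : ℕ} {f : EuclideanSpace ℝ (Fin n) → ℝ}
    {s : Set (EuclideanSpace ℝ (Fin n))}
    (hs : IsOpen s) {x : EuclideanSpace ℝ (Fin n)} (hx : x ∈ s)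
    (hf : ContDiffOn ℝ 2 f s) (hmin : ∀ y ∈ s, f x ≤ f y)
    (v : EuclideanSpace ℝ (Fin n)) :
    0 ≤ iteratedFDeriv ℝ 2 f x ![v, v] := by
  rw [iteratedFDeriv_two_apply]
  show (0:ℝ) ≤ fderiv ℝ (fderiv ℝ f) x v v
  have hf1 : ContDiffOn ℝ 1 (fderiv ℝ f) s := hf.fderiv_of_isOpen hs (by norm_num)
  have hdf : ∀ y ∈ s, DifferentiableAt ℝ f y := fun y hy =>
    ((hf y hy).differentiableWithinAt (by norm_num)).differentiableAt (hs.mem_nhds hy)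
  have hdff : DifferentiableAt ℝ (fderiv ℝ f) x :=
    ((hf1 x hx).differentiableWithinAt one_ne_zero).differentiableAt (hs.mem_nhds hx)
  obtain ⟨r', hr', hball⟩ := Metric.isOpen_iff.1 hs x hx
  set r : ℝ := r' / (‖v‖ + 1) with hrdef
  have hnv : 0 < ‖v‖ + 1 := by positivity
  have hr : 0 < r := by positivity
  have hmem : ∀ s' ∈ Set.Ioo (-r) r, x + s' • v ∈ s := by
    intro s' hs'
    apply hball
    rw [Metric.mem_ball, dist_eq_norm]
    have h1 : ‖x + s' • v - x‖ = |s'| * ‖v‖ := by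
      rw [add_sub_cancel_left, norm_smul, Real.norm_eq_abs]
    rw [h1]
    have habs : |s'| < r := abs_lt.2 ⟨hs'.1, hs'.2⟩
    calc |s'| * ‖v‖ ≤ |s'| * (‖v‖ + 1) := by nlinarith [abs_nonneg s']
    _ < r * (‖v‖+1) := by nlinarith [abs_nonneg s']
    _ = r' := by rw [hrdef]; exact div_mul_cancel₀ r' hnv.ne'
  have hline : ∀ s' : ℝ, HasDerivAt (fun t : ℝ => x + t • v) v s' := by
    intro s'
    simpa using ((hasDerivAt_id s').smul_const v).const_add x
  set g : ℝ → ℝ := fun s' => f (x + s' • v) with hg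
  set g' : ℝ → ℝ := fun s' => fderiv ℝ f (x + s' • v) v with hg'
  have hgd : ∀ s' ∈ Set.Ioo (-r) r, HasDerivAt g (g' s') s' := by
    intro s' hs'
    have hd := (hdf _ (hmem s' hs')).hasFDerivAt
    exact (hd.comp_hasDerivAt s' (hline s'))
  have hgd2 : HasDerivAt g' ((fderiv ℝ (fderiv ℝ f) x v) v) 0 := by
    have hc : HasFDerivAt (fun y => fderiv ℝ f y v)
        (((fderiv ℝ (fderiv ℝ f) x).flip) v) x := by
      have := hdff.hasFDerivAt.clm_apply (hasFDerivAt_const v x)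
      simpa using this
    have hc' : HasFDerivAt (fun y => fderiv ℝ f y v)
        (((fderiv ℝ (fderiv ℝ f) x).flip) v) (x + (0:ℝ) • v) := by
      simpa using hc
    have := hc'.comp_hasDerivAt 0 (hline 0)
    rw [ContinuousLinearMap.flip_apply] at this; exact this
  refine second_test hr hgd hgd2 (fun s' hs' => ?_)
  have h1 : g 0 = f x := by simp [hg]
  rw [h1]
  exact hmin _ (hmem s' hs')

lemma iter2_sub {n : ℕ} {f g : EuclideanSpace ℝ (Fin n) → ℝ}
    {s : Set (EuclideanSpace ℝ (Fin n))}
    (hs : IsOpen s) {x : EuclideanSpace ℝ (Fin n)} (hx : x ∈ s)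
    (hf : ContDiffOn ℝ 2 f s) (hg : ContDiffOn ℝ 2 g s) (c : ℝ)
    (v : EuclideanSpace ℝ (Fin n)) :
    iteratedFDeriv ℝ 2 (fun y => f y - c * g y) x ![v, v]
      = iteratedFDeriv ℝ 2 f x ![v, v] - c * iteratedFDeriv ℝ 2 g x ![v, v] := by
  have hdf : ∀ y ∈ s, DifferentiableAt ℝ f y := fun y hy =>
    ((hf y hy).differentiableWithinAt (by norm_num)).differentiableAt (hs.mem_nhds hy)
  have hdg : ∀ y ∈ s, DifferentiableAt ℝ g y := fun y hy =>
    ((hg y hy).differentiableWithinAt (by norm_num)).differentiableAt (hs.mem_nhds hy)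
  have hf1 : ContDiffOn ℝ 1 (fderiv ℝ f) s := hf.fderiv_of_isOpen hs (by norm_num)
  have hg1 : ContDiffOn ℝ 1 (fderiv ℝ g) s := hg.fderiv_of_isOpen hs (by norm_num)
  have hdff : DifferentiableAt ℝ (fderiv ℝ f) x :=
    ((hf1 x hx).differentiableWithinAt one_ne_zero).differentiableAt (hs.mem_nhds hx)
  have hdfg : DifferentiableAt ℝ (fderiv ℝ g) x :=
    ((hg1 x hx).differentiableWithinAt one_ne_zero).differentiableAt (hs.mem_nhds hx)
  have hEE : (fderiv ℝ (fun y => f y - c * g y)) =ᶠ[nhds x]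
      (fun y => fderiv ℝ f y - c • fderiv ℝ g y) := by
    filter_upwards [hs.mem_nhds hx] with y hy
    rw [fderiv_fun_sub (hdf y hy) ((hdg y hy).const_mul c)]
    congr 1
    exact fderiv_const_mul (hdg y hy) c
  rw [iteratedFDeriv_two_apply, iteratedFDeriv_two_apply, iteratedFDeriv_two_apply]
  rw [hEE.fderiv_eq]
  rw [fderiv_fun_sub (g := fun y => c • fderiv ℝ g y) hdff (hdfg.const_smul c), fderiv_fun_const_smul hdfg c]
  simp

/-- The laplacian of `f - c*g` at an interior point of an open set on which both are C². -/
lemma laplacian_sub {n : ℕ} {f g : EuclideanSpace ℝ (Fin n) → ℝ}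
    {s : Set (EuclideanSpace ℝ (Fin n))}
    (hs : IsOpen s) {x : EuclideanSpace ℝ (Fin n)} (hx : x ∈ s)
    (hf : ContDiffOn ℝ 2 f s) (hg : ContDiffOn ℝ 2 g s) (c : ℝ) :
    laplacian (fun y => f y - c * g y) x = laplacian f x - c * laplacian g x := by
  unfold laplacian
  rw [Finset.mul_sum, ← Finset.sum_sub_distrib]
  apply Finset.sum_congr rfl
  intro i _
  rw [iter2_sub hs hx hf hg c]

/-- Derivative within `Icc a b` at the right endpoint of a function minimized there
is nonpositive. -/
lemma right_endpoint_deriv_nonpos {ψ : ℝ → ℝ} {D a b : ℝ} (hab : a < b)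
    (h : HasDerivWithinAt ψ D (Set.Icc a b) b) (hmin : ∀ t ∈ Set.Icc a b, ψ b ≤ ψ t) :
    D ≤ 0 := by
  have hsl := hasDerivWithinAt_iff_tendsto_slope.1 h
  have hdiff : Set.Icc a b \ {b} = Set.Ico a b := Set.Icc_sdiff_right
  have hne : (nhdsWithin b (Set.Icc a b \ {b})).NeBot := by
    rw [hdiff]
    refine mem_closure_iff_nhdsWithin_neBot.mp ?_
    rw [closure_Ico hab.ne]
    exact Set.right_mem_Icc.2 hab.le
  refine le_of_tendsto hsl ?_
  filter_upwards [self_mem_nhdsWithin] with t ht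
  rw [hdiff] at ht
  rw [slope_def_field]
  apply div_nonpos_of_nonneg_of_nonpos
  · have := hmin t ⟨ht.1, ht.2.le⟩
    linarith
  · linarith [ht.2]

open intervalIntegral in
lemma integral_linear (c1 c2 p q : ℝ) :
    ∫ τ in p..q, (c1 + c2 * τ) = c1 * (q - p) + c2 * (q^2 - p^2)/2 := by
  rw [integral_add intervalIntegrable_const (intervalIntegrable_id.const_mul _),
      integral_const_mul, integral_id, integral_const]
  simp only [smul_eq_mul]
  ring
/-- Dirichlet version of Lemma 2.3, case `m ≥ 3`: a classical solution
`u` of `∂ₜ u = Δu − k v₀ u^m exp(−k ∫₀ᵗ u)` with homogeneous Dirichlet boundary values and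
initial datum `u₀` lies above `e^{−δt} u̲`, where `u̲` is a positive heat subsolution with
`0 ≤ u̲ ≤ 1`, `2 ∂ₜ u̲ ≤ 1` and `0 ≤ u̲(·,0) ≤ min{u₀, 1}`, provided
`δ > ‖v₀‖_{C(closure Ω)} e^{−1}`. -/
theorem lower_bound_comparison' (n : ℕ)
    (Ω : Set (EuclideanSpace ℝ (Fin n))) (hΩo : IsOpen Ω) (hΩb : Bornology.IsBounded Ω)
    (T : ℝ) (hT : 0 < T)
    (m : ℝ) (hm3 : 3 ≤ m)
    (k : ℝ) (hk : 0 < k)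
    (u₀ v₀ : EuclideanSpace ℝ (Fin n) → ℝ)
    (hu₀c : ContinuousOn u₀ (closure Ω)) (hv₀c : ContinuousOn v₀ (closure Ω))
    (hu₀nonneg : ∀ x ∈ closure Ω, 0 ≤ u₀ x) (hv₀nonneg : ∀ x ∈ closure Ω, 0 ≤ v₀ x)
    (hsep : ∀ x ∈ closure Ω, u₀ x * v₀ x = 0)
    (δ : ℝ) (hδ : supNorm v₀ (closure Ω) * Real.exp (-1) < δ)
    -- the heat subsolution u̲ (denoted `w`) and its time derivative `wt`
    (w wt : EuclideanSpace ℝ (Fin n) → ℝ → ℝ)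
    (hwcont : ContinuousOn (fun p : EuclideanSpace ℝ (Fin n) × ℝ => w p.1 p.2)
      (closure Ω ×ˢ Set.Icc 0 T))
    (hwx : ∀ t ∈ Set.Ioc 0 T, ContDiffOn ℝ 2 (fun y => w y t) Ω)
    (hwt : ∀ x ∈ Ω, ∀ t ∈ Set.Icc (0 : ℝ) T, HasDerivWithinAt (w x) (wt x t) (Set.Icc 0 T) t)
    (hwtc : ∀ x ∈ Ω, ContinuousOn (wt x) (Set.Icc 0 T))
    (hwheat : ∀ x ∈ Ω, ∀ t ∈ Set.Ioc 0 T, wt x t = laplacian (fun y => w y t) x)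
    (hwbdry : ∀ x ∈ frontier Ω, ∀ t ∈ Set.Icc (0 : ℝ) T, w x t = 0)
    (hwinit : ∀ x ∈ Ω, 0 ≤ w x 0 ∧ w x 0 ≤ min (u₀ x) 1)
    (hw01 : ∀ x ∈ closure Ω, ∀ t ∈ Set.Icc (0 : ℝ) T, 0 ≤ w x t ∧ w x t ≤ 1)
    (hwpos : ∀ x ∈ Ω, ∀ t ∈ Set.Ioc 0 T, 0 < w x t)
    (hwineq : ∀ x ∈ Ω, ∀ t ∈ Set.Icc (0 : ℝ) T, 2 * wt x t ≤ 1)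
    -- the solution u of the scalar integro-differential equation
    (u : EuclideanSpace ℝ (Fin n) → ℝ → ℝ)
    (hucont : ContinuousOn (fun p : EuclideanSpace ℝ (Fin n) × ℝ => u p.1 p.2)
      (closure Ω ×ˢ Set.Icc 0 T))
    (hubound : ∀ x ∈ closure Ω, ∀ t ∈ Set.Icc (0 : ℝ) T,
      0 ≤ u x t ∧ u x t ≤ supNorm u₀ (closure Ω))
    (hux : ∀ t ∈ Set.Ioc 0 T, ContDiffOn ℝ 2 (fun y => u y t) Ω)
    (hueq : ∀ x ∈ Ω, ∀ t ∈ Set.Ioc 0 T,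
      HasDerivWithinAt (u x)
        (laplacian (fun y => u y t) x
          - k * v₀ x * u x t ^ m * Real.exp (-(k * ∫ τ in (0 : ℝ)..t, u x τ)))
        (Set.Icc 0 T) t)
    (hubdry : ∀ x ∈ frontier Ω, ∀ t ∈ Set.Ioc 0 T, u x t = 0)
    (huinit : ∀ x ∈ closure Ω, u x 0 = u₀ x) :
    ∀ x ∈ closure Ω, ∀ t ∈ Set.Icc (0 : ℝ) T, Real.exp (-δ * t) * w x t ≤ u x t := by
  have hclK : IsCompact (closure Ω) :=
    Metric.isCompact_of_isClosed_isBounded isClosed_closure hΩb.closure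
  have hKc : IsCompact (closure Ω ×ˢ Set.Icc (0:ℝ) T) := hclK.prod isCompact_Icc
  have hcases : ∀ x ∈ closure Ω, x ∈ Ω ∨ x ∈ frontier Ω := by
    intro x hx
    by_cases h : x ∈ Ω
    · exact Or.inl h
    · right
      rw [hΩo.frontier_eq]
      exact ⟨hx, h⟩
  set N := supNorm v₀ (closure Ω) with hNdef
  set C := T + T^2/2 with hCdef
  have hC : 0 < C := by rw [hCdef]; nlinarith
  have hBdd : BddAbove ((fun y => |v₀ y|) '' closure Ω) :=
    hclK.bddAbove_image hv₀c.abs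
  have hNv : ∀ x ∈ closure Ω, v₀ x ≤ N := by
    intro x hx
    exact le_trans (le_abs_self _) (le_csSup hBdd ⟨x, hx, rfl⟩)
  have hN0 : ∀ x ∈ closure Ω, (0:ℝ) ≤ N := by
    intro x hx
    exact le_trans (abs_nonneg _) (le_csSup hBdd ⟨x, hx, rfl⟩)
  have hwc1 : ∀ x ∈ closure Ω, ContinuousOn (w x) (Set.Icc 0 T) := by
    intro x hx
    exact hwcont.comp ((Continuous.prodMk_right x).continuousOn) (fun t ht => ⟨hx, ht⟩)
  have huc1 : ∀ x ∈ closure Ω, ContinuousOn (u x) (Set.Icc 0 T) := by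
    intro x hx
    exact hucont.comp ((Continuous.prodMk_right x).continuousOn) (fun t ht => ⟨hx, ht⟩)
  -- THE KEY CLAIM
  have key : ∀ ε : ℝ, 0 < ε → N * Real.exp (-1) * Real.exp (k * C * ε) ≤ δ →
      ∀ p ∈ closure Ω ×ˢ Set.Icc (0:ℝ) T,
        0 < u p.1 p.2 - Real.exp (-δ * p.2) * w p.1 p.2 + ε * (1 + p.2) := by
    intro ε hε hεδ
    by_contra hcon
    push_neg at hcon
    obtain ⟨p₁, hp₁K, hp₁⟩ := hcon
    set Z : EuclideanSpace ℝ (Fin n) × ℝ → ℝ :=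
      fun p => u p.1 p.2 - Real.exp (-δ * p.2) * w p.1 p.2 + ε * (1 + p.2) with hZdef
    have hZc : ContinuousOn Z (closure Ω ×ˢ Set.Icc (0:ℝ) T) := by
      apply ContinuousOn.add
      · apply ContinuousOn.sub hucont
        exact (Continuous.continuousOn (by fun_prop)).mul hwcont
      · exact Continuous.continuousOn (by fun_prop)
    set S := (closure Ω ×ˢ Set.Icc (0:ℝ) T) ∩ Z ⁻¹' (Set.Iic 0) with hSdef
    have hSclosed : IsClosed S :=
      hZc.preimage_isClosed_of_isClosed hKc.isClosed isClosed_Iic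
    have hScpt : IsCompact S := hKc.of_isClosed_subset hSclosed Set.inter_subset_left
    have hSne : S.Nonempty := ⟨p₁, hp₁K, hp₁⟩
    obtain ⟨p₀, hp₀S, hp₀min⟩ := hScpt.exists_isMinOn hSne continuous_snd.continuousOn
    obtain ⟨hp₀K, hZ₀'⟩ := hp₀S
    have hx₀ : p₀.1 ∈ closure Ω := hp₀K.1
    have ht₀ : p₀.2 ∈ Set.Icc (0:ℝ) T := hp₀K.2
    set x₀ := p₀.1 with hx₀def
    set t₀ := p₀.2 with ht₀def
    have hZ₀ : Z p₀ ≤ 0 := hZ₀'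
    -- t₀ > 0
    have ht₀pos : 0 < t₀ := by
      rcases lt_or_eq_of_le ht₀.1 with h | h
      · exact h
      · exfalso
        have hu0 : u x₀ t₀ = u₀ x₀ := by rw [← h]; exact huinit x₀ hx₀
        have hw0le : w x₀ 0 ≤ u₀ x₀ := by
          rcases hcases x₀ hx₀ with hin | hfr
          · exact le_trans (hwinit x₀ hin).2 (min_le_left _ _)
          · rw [hwbdry x₀ hfr 0 (Set.left_mem_Icc.2 hT.le)]
            exact hu₀nonneg x₀ hx₀
        have hexp1 : Real.exp (-δ * t₀) = 1 := by rw [← h]; simp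
        have hZval : Z p₀ = u x₀ t₀ - Real.exp (-δ * t₀) * w x₀ t₀ + ε * (1 + t₀) := rfl
        rw [hZval, hexp1, hu0, ← h] at hZ₀
        nlinarith [hZ₀, hw0le, hε]
    have ht₀Ioc : t₀ ∈ Set.Ioc 0 T := ⟨ht₀pos, ht₀.2⟩
    -- x₀ interior
    have hx₀Ω : x₀ ∈ Ω := by
      rcases hcases x₀ hx₀ with h | h
      · exact h
      · exfalso
        have hu0 := hubdry x₀ h t₀ ht₀Ioc
        have hw0 := hwbdry x₀ h t₀ ⟨ht₀pos.le, ht₀.2⟩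
        have hZval : Z p₀ = u x₀ t₀ - Real.exp (-δ * t₀) * w x₀ t₀ + ε * (1 + t₀) := rfl
        rw [hZval, hu0, hw0] at hZ₀
        nlinarith [hZ₀, hε, ht₀pos]
    -- everything before t₀ is positive
    have hbefore : ∀ q ∈ closure Ω ×ˢ Set.Icc (0:ℝ) T, q.2 < t₀ → 0 < Z q := by
      intro q hq hlt
      by_contra hq0
      push_neg at hq0
      exact absurd (hp₀min (Set.mem_inter hq hq0)) (not_le.2 hlt)
    -- Z(·, t₀) is nonnegative on closure Ω
    have hZt₀ : ∀ x ∈ closure Ω, 0 ≤ Z (x, t₀) := by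
      intro x hx
      have hφ : ContinuousWithinAt (fun t => Z (x, t)) (Set.Icc 0 T) t₀ :=
        (hZc.comp ((Continuous.prodMk_right x).continuousOn) (fun t ht => ⟨hx, ht⟩)) t₀
          ⟨ht₀pos.le, ht₀.2⟩
      have hne : (nhdsWithin t₀ (Set.Ioo 0 t₀)).NeBot := by
        refine mem_closure_iff_nhdsWithin_neBot.mp ?_
        rw [closure_Ioo ht₀pos.ne]
        exact Set.right_mem_Icc.2 ht₀pos.le
      have htend : Filter.Tendsto (fun t => Z (x, t)) (nhdsWithin t₀ (Set.Ioo 0 t₀))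
          (nhds (Z (x, t₀))) :=
        hφ.mono_left (nhdsWithin_mono t₀ (fun s hs => ⟨hs.1.le, le_trans hs.2.le ht₀.2⟩))
      refine ge_of_tendsto htend ?_
      filter_upwards [self_mem_nhdsWithin] with t ht
      exact (hbefore (x, t) ⟨hx, ⟨ht.1.le, le_trans ht.2.le ht₀.2⟩⟩ ht.2).le
    have hZp₀ : Z p₀ = 0 := le_antisymm hZ₀ (hZt₀ x₀ hx₀)
    -- spatial minimum
    set c := Real.exp (-δ * t₀) with hcdef
    have hcpos : 0 < c := Real.exp_pos _
    set F : EuclideanSpace ℝ (Fin n) → ℝ := fun y => u y t₀ - c * w y t₀ with hFdef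
    have hFmin : ∀ y ∈ Ω, F x₀ ≤ F y := by
      intro y hy
      have h1 := hZt₀ y (subset_closure hy)
      have h2 : Z (y, t₀) = F y + ε * (1 + t₀) := rfl
      have h3 : Z p₀ = F x₀ + ε * (1 + t₀) := rfl
      rw [h3] at hZp₀
      rw [h2] at h1
      linarith
    have hFcd : ContDiffOn ℝ 2 F Ω :=
      (hux t₀ ht₀Ioc).sub (contDiffOn_const.mul (hwx t₀ ht₀Ioc))
    have hlapF : 0 ≤ laplacian F x₀ := by
      unfold laplacian
      apply Finset.sum_nonneg
      intro i _
      exact dir_second_nonneg hΩo hx₀Ω hFcd hFmin _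
    have hlapeq : laplacian F x₀
        = laplacian (fun y => u y t₀) x₀ - c * laplacian (fun y => w y t₀) x₀ :=
      laplacian_sub hΩo hx₀Ω (hux t₀ ht₀Ioc) (hwx t₀ ht₀Ioc) c
    have hlapw : laplacian (fun y => w y t₀) x₀ = wt x₀ t₀ := (hwheat x₀ hx₀Ω t₀ ht₀Ioc).symm
    have hLu : c * wt x₀ t₀ ≤ laplacian (fun y => u y t₀) x₀ := by
      rw [hlapeq, hlapw] at hlapF
      linarith
    -- time derivative at (x₀, t₀)
    set Lu := laplacian (fun y => u y t₀) x₀ with hLudef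
    set I := ∫ τ in (0:ℝ)..t₀, u x₀ τ with hIdef
    set R := k * v₀ x₀ * u x₀ t₀ ^ m * Real.exp (-(k * I)) with hRdef
    have hu' : HasDerivWithinAt (u x₀) (Lu - R) (Set.Icc 0 T) t₀ := hueq x₀ hx₀Ω t₀ ht₀Ioc
    have hexp' : HasDerivAt (fun t : ℝ => Real.exp (-δ * t)) (-δ * c) t₀ := by
      have h1 : HasDerivAt (fun t : ℝ => -δ * t) (-δ) t₀ := by
        simpa using (hasDerivAt_id t₀).const_mul (-δ)
      have := (Real.hasDerivAt_exp (-δ * t₀)).comp t₀ h1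
      simpa [Function.comp_def, hcdef, mul_comm] using this
    have hw' : HasDerivWithinAt (fun t => Real.exp (-δ * t) * w x₀ t)
        (-δ * c * w x₀ t₀ + c * wt x₀ t₀) (Set.Icc 0 T) t₀ := by
      have := (hexp'.hasDerivWithinAt).mul (hwt x₀ hx₀Ω t₀ ⟨ht₀pos.le, ht₀.2⟩)
      exact this
    have hε' : HasDerivWithinAt (fun t : ℝ => ε * (1 + t)) ε (Set.Icc 0 T) t₀ := by
      simpa using (((hasDerivAt_id t₀).const_add (1:ℝ)).const_mul ε).hasDerivWithinAt
    have hψ : HasDerivWithinAt (fun t => Z (x₀, t))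
        ((Lu - R) - (-δ * c * w x₀ t₀ + c * wt x₀ t₀) + ε) (Set.Icc 0 T) t₀ :=
      (hu'.sub hw').add hε'
    have hmint : ∀ t ∈ Set.Icc 0 t₀, (fun t => Z (x₀, t)) t₀ ≤ (fun t => Z (x₀, t)) t := by
      intro t ht
      simp only []
      have hZt₀0 : Z (x₀, t₀) = 0 := hZp₀
      rw [hZt₀0]
      rcases lt_or_eq_of_le ht.2 with hlt | heq
      · exact (hbefore (x₀, t) ⟨hx₀, ht.1, le_trans ht.2 ht₀.2⟩ hlt).le
      · rw [heq, hZt₀0]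
    have hD : (Lu - R) - (-δ * c * w x₀ t₀ + c * wt x₀ t₀) + ε ≤ 0 :=
      right_endpoint_deriv_nonpos ht₀pos (hψ.mono (Set.Icc_subset_Icc_right ht₀.2)) hmint
    -- key differential inequality
    set a := w x₀ t₀ with hadef
    have hkey1 : δ * (c * a) + ε ≤ R := by linarith only [hD, hLu]
    -- scalar facts
    have ha01 := hw01 x₀ hx₀ t₀ ⟨ht₀pos.le, ht₀.2⟩
    have huu0 := (hubound x₀ hx₀ t₀ ⟨ht₀pos.le, ht₀.2⟩).1
    have hZeq : u x₀ t₀ = c * a - ε * (1 + t₀) := by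
      have hZval : Z p₀ = u x₀ t₀ - c * a + ε * (1 + t₀) := rfl
      rw [hZval] at hZp₀
      linarith
    have hq : 0 < ε * (1 + t₀) := mul_pos hε (by linarith)
    have hca_pos : 0 < c * a := by linarith [hZeq, huu0, hq]
    have hapos : 0 < a := by
      rcases mul_pos_iff.1 hca_pos with ⟨_, h⟩ | ⟨h, _⟩
      · exact h
      · linarith [hcpos]
    have hδpos : 0 < δ :=
      lt_of_le_of_lt (mul_nonneg (hN0 x₀ hx₀) (Real.exp_nonneg _)) hδ
    -- case v₀ x₀ = 0
    rcases lt_or_eq_of_le (hv₀nonneg x₀ hx₀) with hv₀pos | hv₀zero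
    swap
    · have hR0 : R = 0 := by rw [hRdef, ← hv₀zero]; ring
      rw [hR0] at hkey1
      have hpos := mul_pos hδpos hca_pos
      linarith only [hkey1, hpos, hε]
    -- case v₀ x₀ > 0 : then u₀ x₀ = 0, w x₀ 0 = 0
    have hu₀0 : u₀ x₀ = 0 := by
      rcases mul_eq_zero.1 (hsep x₀ hx₀) with h | h
      · exact h
      · exact absurd h (ne_of_gt hv₀pos)
    have hw00 : w x₀ 0 = 0 := by
      have h2 := (hwinit x₀ hx₀Ω).2
      rw [hu₀0] at h2
      have h3 := (hwinit x₀ hx₀Ω).1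
      have : min (0:ℝ) 1 = 0 := by norm_num
      rw [this] at h2
      linarith
    -- antitonicity of w - t/2
    have hanti : AntitoneOn (fun t => w x₀ t - t/2) (Set.Icc 0 T) := by
      apply antitoneOn_of_hasDerivWithinAt_nonpos (f' := fun t => wt x₀ t - 1/2)
        (convex_Icc 0 T)
      · exact (hwc1 x₀ hx₀).sub (Continuous.continuousOn (by fun_prop))
      · intro t ht
        rw [interior_Icc] at ht ⊢
        have h1 : HasDerivWithinAt (w x₀) (wt x₀ t) (Set.Ioo 0 T) t :=
          (hwt x₀ hx₀Ω t ⟨ht.1.le, ht.2.le⟩).mono Set.Ioo_subset_Icc_self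
        have h2 : HasDerivWithinAt (fun t : ℝ => t/2) (1/2) (Set.Ioo 0 T) t := by
          simpa using ((hasDerivAt_id t).div_const 2).hasDerivWithinAt
        exact h1.sub h2
      · intro t ht
        rw [interior_Icc] at ht
        linarith [hwineq x₀ hx₀Ω t ⟨ht.1.le, ht.2.le⟩]
    have h2a : 2 * a ≤ t₀ := by
      have := hanti (Set.left_mem_Icc.2 hT.le) ⟨ht₀pos.le, ht₀.2⟩ ht₀pos.le
      simp only [hw00] at this
      rw [hadef]
      linarith
    have hb0 : 0 ≤ t₀ - 2*a := by linarith
    have hwlow : ∀ τ ∈ Set.Icc (t₀ - 2*a) t₀, a - (t₀ - τ)/2 ≤ w x₀ τ := by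
      intro τ hτ
      have hτT : τ ∈ Set.Icc (0:ℝ) T := ⟨le_trans hb0 hτ.1, le_trans hτ.2 ht₀.2⟩
      have := hanti hτT ⟨ht₀pos.le, ht₀.2⟩ hτ.2
      rw [hadef]
      linarith
    -- integral lower bound
    have huIcc : ∀ t' ∈ Set.Icc 0 t₀, t' ∈ Set.Icc (0:ℝ) T :=
      fun t' ht' => ⟨ht'.1, le_trans ht'.2 ht₀.2⟩
    have huint : IntervalIntegrable (u x₀) MeasureTheory.volume 0 t₀ := by
      apply ContinuousOn.intervalIntegrable
      rw [Set.uIcc_of_le ht₀pos.le]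
      exact (huc1 x₀ hx₀).mono huIcc
    have hg₁cont : ContinuousOn (fun τ => Real.exp (-δ * τ) * w x₀ τ - ε * (1 + τ))
        (Set.Icc 0 T) :=
      ((Continuous.continuousOn (by fun_prop)).mul (hwc1 x₀ hx₀)).sub
        (Continuous.continuousOn (by fun_prop))
    have hg₁int : IntervalIntegrable (fun τ => Real.exp (-δ * τ) * w x₀ τ - ε * (1 + τ))
        MeasureTheory.volume 0 t₀ := by
      apply ContinuousOn.intervalIntegrable
      rw [Set.uIcc_of_le ht₀pos.le]
      exact hg₁cont.mono huIcc
    have hstepA : ∫ τ in (0:ℝ)..t₀, (Real.exp (-δ * τ) * w x₀ τ - ε * (1 + τ)) ≤ I := by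
      rw [hIdef]
      apply intervalIntegral.integral_mono_on ht₀pos.le hg₁int huint
      intro τ hτ
      have := hmint τ hτ
      have hZt₀0 : Z (x₀, t₀) = 0 := hZp₀
      simp only [hZt₀0] at this
      have hZval : Z (x₀, τ) = u x₀ τ - Real.exp (-δ * τ) * w x₀ τ + ε * (1 + τ) := rfl
      rw [hZval] at this
      linarith
    -- the ε-part of the integral
    have hewcont : ContinuousOn (fun τ => Real.exp (-δ * τ) * w x₀ τ) (Set.Icc 0 T) :=
      (Continuous.continuousOn (by fun_prop)).mul (hwc1 x₀ hx₀)
    have hewint : ∀ s1 s2 : ℝ, s1 ∈ Set.Icc (0:ℝ) t₀ → s2 ∈ Set.Icc (0:ℝ) t₀ →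
        IntervalIntegrable (fun τ => Real.exp (-δ * τ) * w x₀ τ)
          MeasureTheory.volume s1 s2 := by
      intro s1 s2 hs1 hs2
      apply ContinuousOn.intervalIntegrable
      apply hewcont.mono
      intro τ hτ
      rcases Set.mem_uIcc.1 hτ with h | h
      · exact huIcc τ ⟨le_trans hs1.1 h.1, le_trans h.2 hs2.2⟩
      · exact huIcc τ ⟨le_trans hs2.1 h.1, le_trans h.2 hs1.2⟩
    have hεint : IntervalIntegrable (fun τ : ℝ => ε * (1 + τ)) MeasureTheory.volume 0 t₀ :=
      (Continuous.intervalIntegrable (by fun_prop) _ _)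
    have hstepB : ∫ τ in (0:ℝ)..t₀, (Real.exp (-δ * τ) * w x₀ τ - ε * (1 + τ))
        = (∫ τ in (0:ℝ)..t₀, Real.exp (-δ * τ) * w x₀ τ) - ∫ τ in (0:ℝ)..t₀, ε * (1 + τ) :=
      intervalIntegral.integral_sub (hewint 0 t₀ ⟨le_refl 0, ht₀pos.le⟩
        ⟨ht₀pos.le, le_refl t₀⟩) hεint
    have hεval : ∫ τ in (0:ℝ)..t₀, ε * (1 + τ) = ε * (t₀ + t₀^2/2) := by
      have hco : Set.EqOn (fun τ : ℝ => ε * (1 + τ)) (fun τ : ℝ => ε + ε * τ)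
          (Set.uIcc 0 t₀) := by
        intro τ _
        ring
      rw [intervalIntegral.integral_congr hco, integral_linear]
      ring
    have hεbound : ε * (t₀ + t₀^2/2) ≤ ε * C := by
      rw [hCdef]
      have h1 : t₀ ≤ T := ht₀.2
      have h2 : t₀^2 ≤ T^2 := pow_le_pow_left₀ ht₀pos.le h1 2
      have h3 : t₀ + t₀^2/2 ≤ T + T^2/2 := by linarith only [h1, h2]
      exact mul_le_mul_of_nonneg_left h3 hε.le
    -- splitting the exp·w integral
    have hsplit : (∫ τ in (0:ℝ)..(t₀ - 2*a), Real.exp (-δ * τ) * w x₀ τ)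
        + (∫ τ in (t₀ - 2*a)..t₀, Real.exp (-δ * τ) * w x₀ τ)
        = ∫ τ in (0:ℝ)..t₀, Real.exp (-δ * τ) * w x₀ τ :=
      intervalIntegral.integral_add_adjacent_intervals
        (hewint 0 (t₀ - 2*a) ⟨le_refl 0, ht₀pos.le⟩ ⟨hb0, by linarith [hapos]⟩)
        (hewint (t₀ - 2*a) t₀ ⟨hb0, by linarith [hapos]⟩ ⟨ht₀pos.le, le_refl t₀⟩)
    have hfirst : 0 ≤ ∫ τ in (0:ℝ)..(t₀ - 2*a), Real.exp (-δ * τ) * w x₀ τ := by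
      apply intervalIntegral.integral_nonneg hb0
      intro τ hτ
      have hτT : τ ∈ Set.Icc (0:ℝ) T := huIcc τ ⟨hτ.1, by linarith [hτ.2, hapos]⟩
      exact mul_nonneg (Real.exp_nonneg _) (hw01 x₀ hx₀ τ hτT).1
    have hsecond : c * a^2 ≤ ∫ τ in (t₀ - 2*a)..t₀, Real.exp (-δ * τ) * w x₀ τ := by
      have hmono : ∫ τ in (t₀ - 2*a)..t₀, (c*(a - t₀/2) + (c/2)*τ)
          ≤ ∫ τ in (t₀ - 2*a)..t₀, Real.exp (-δ * τ) * w x₀ τ := by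
        apply intervalIntegral.integral_mono_on (by linarith [hapos])
          (Continuous.intervalIntegrable (by fun_prop) _ _)
          (hewint (t₀ - 2*a) t₀ ⟨hb0, by linarith [hapos]⟩ ⟨ht₀pos.le, le_refl t₀⟩)
        intro τ hτ
        have hτT : τ ∈ Set.Icc (0:ℝ) T := huIcc τ ⟨le_trans hb0 hτ.1, hτ.2⟩
        have hwl := hwlow τ hτ
        have hwl0 : 0 ≤ a - (t₀ - τ)/2 := by linarith [hτ.1]
        have hce : c ≤ Real.exp (-δ * τ) := by
          rw [hcdef]
          apply Real.exp_le_exp.2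
          have := mul_le_mul_of_nonneg_left hτ.2 hδpos.le
          linarith only [this]
        have heq : c*(a - t₀/2) + (c/2)*τ = c * (a - (t₀ - τ)/2) := by ring
        rw [heq]
        exact mul_le_mul hce hwl hwl0 (Real.exp_nonneg _)
      have hcomp : ∫ τ in (t₀ - 2*a)..t₀, (c*(a - t₀/2) + (c/2)*τ) = c * a^2 := by
        rw [integral_linear]
        ring
      rw [hcomp] at hmono
      exact hmono
    have hIlow : c * a^2 - ε * C ≤ I := by
      have h1 := hstepA
      rw [hstepB, hεval, ← hsplit] at h1
      have h2 := add_le_add hfirst hsecond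
      rw [zero_add] at h2
      exact le_trans (sub_le_sub h2 hεbound) h1
    -- final estimates
    have hc1 : c ≤ 1 := by
      rw [hcdef]
      apply Real.exp_le_one_iff.2
      have := mul_nonneg hδpos.le ht₀pos.le
      linarith only [this]
    have hca1 : c * a ≤ 1 := mul_le_one₀ hc1 ha01.1 ha01.2
    have hum : u x₀ t₀ ^ m ≤ (c * a^2) * (c * a) := by
      have h1 : u x₀ t₀ ≤ c * a := by linarith only [hZeq, hq]
      calc u x₀ t₀ ^ m ≤ (c*a) ^ m := Real.rpow_le_rpow huu0 h1 (by linarith)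
        _ ≤ (c*a) ^ (3:ℝ) := Real.rpow_le_rpow_of_exponent_ge hca_pos hca1 hm3
        _ = (c*a)^(3:ℕ) := by
            rw [← Real.rpow_natCast (c*a) 3]; norm_num
        _ ≤ (c * a^2) * (c * a) := by
            have e : c * a^2 * (c * a) - (c*a)^(3:ℕ) = (1 - c) * (c^2 * a^3) := by ring
            have e2 : 0 ≤ (1 - c) * (c^2 * a^3) :=
              mul_nonneg (by linarith only [hc1]) (by positivity)
            linarith only [e, e2]
    have hexpI : Real.exp (-(k * I)) ≤ Real.exp (-(k * (c*a^2))) * Real.exp (k * C * ε) := by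
      rw [← Real.exp_add]
      apply Real.exp_le_exp.2
      have := mul_le_mul_of_nonneg_left hIlow hk.le
      linarith only [this]
    have hxe : k * (c*a^2) * Real.exp (-(k*(c*a^2))) ≤ Real.exp (-1) := by
      have h1 : k*(c*a^2) ≤ Real.exp (k*(c*a^2) - 1) := by
        have := Real.add_one_le_exp (k*(c*a^2) - 1)
        linarith
      calc k*(c*a^2) * Real.exp (-(k*(c*a^2)))
          ≤ Real.exp (k*(c*a^2) - 1) * Real.exp (-(k*(c*a^2))) :=
            mul_le_mul_of_nonneg_right h1 (Real.exp_nonneg _)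
        _ = Real.exp (-1) := by rw [← Real.exp_add]; ring_nf
    have hvx : v₀ x₀ ≤ N := hNv x₀ hx₀
    have hRle : R ≤ δ * (c * a) := by
      have hkv : 0 ≤ k * v₀ x₀ := mul_nonneg hk.le hv₀pos.le
      have e1 : R ≤ k * v₀ x₀ * ((c*a^2)*(c*a))
          * (Real.exp (-(k*(c*a^2))) * Real.exp (k*C*ε)) := by
        rw [hRdef]
        apply mul_le_mul (mul_le_mul_of_nonneg_left hum hkv) hexpI (Real.exp_nonneg _)
        positivity
      have e2 : k * v₀ x₀ * ((c*a^2)*(c*a)) * (Real.exp (-(k*(c*a^2))) * Real.exp (k*C*ε))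
          = (v₀ x₀ * (c*a) * Real.exp (k*C*ε)) * (k * (c*a^2) * Real.exp (-(k*(c*a^2)))) := by
        ring
      have e3 : (v₀ x₀ * (c*a) * Real.exp (k*C*ε)) * (k * (c*a^2) * Real.exp (-(k*(c*a^2))))
          ≤ (v₀ x₀ * (c*a) * Real.exp (k*C*ε)) * Real.exp (-1) := by
        apply mul_le_mul_of_nonneg_left hxe
        positivity
      have e4 : (v₀ x₀ * (c*a) * Real.exp (k*C*ε)) * Real.exp (-1)
          ≤ (N * (c*a) * Real.exp (k*C*ε)) * Real.exp (-1) := by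
        have : v₀ x₀ * (c*a) * Real.exp (k*C*ε) ≤ N * (c*a) * Real.exp (k*C*ε) := by
          apply mul_le_mul_of_nonneg_right _ (Real.exp_nonneg _)
          exact mul_le_mul_of_nonneg_right hvx hca_pos.le
        exact mul_le_mul_of_nonneg_right this (Real.exp_nonneg _)
      have e5 : (N * (c*a) * Real.exp (k*C*ε)) * Real.exp (-1)
          = (N * Real.exp (-1) * Real.exp (k*C*ε)) * (c*a) := by ring
      have e6 : (N * Real.exp (-1) * Real.exp (k*C*ε)) * (c*a) ≤ δ * (c*a) :=
        mul_le_mul_of_nonneg_right hεδ hca_pos.le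
      calc R ≤ _ := e1
        _ = _ := e2
        _ ≤ _ := e3
        _ ≤ _ := e4
        _ = _ := e5
        _ ≤ _ := e6
    linarith only [hkey1, hRle, hε]
  -- CONCLUSION from the key claim
  intro x hx t ht
  have hN0' : (0:ℝ) ≤ N := hN0 x hx
  refine le_of_forall_pos_le_add ?_
  intro η hη
  have htends : Filter.Tendsto (fun ε : ℝ => N * Real.exp (-1) * Real.exp (k * C * ε))
      (nhds 0) (nhds (N * Real.exp (-1))) := by
    have hcont : Continuous fun ε : ℝ => N * Real.exp (-1) * Real.exp (k * C * ε) := by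
      fun_prop
    have := hcont.tendsto 0
    simpa using this
  have hev1 : ∀ᶠ ε in nhds (0:ℝ), N * Real.exp (-1) * Real.exp (k*C*ε) ≤ δ :=
    htends.eventually_le_const hδ
  have htends2 : Filter.Tendsto (fun ε : ℝ => ε * (1 + T)) (nhds 0) (nhds 0) := by
    have hcont : Continuous fun ε : ℝ => ε * (1 + T) := by fun_prop
    have := hcont.tendsto 0
    simpa using this
  have hev2 : ∀ᶠ ε in nhds (0:ℝ), ε * (1 + T) < η := htends2.eventually_lt_const hη
  have h3 : ∀ᶠ ε in nhdsWithin (0:ℝ) (Set.Ioi 0),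
      (N * Real.exp (-1) * Real.exp (k*C*ε) ≤ δ ∧ ε * (1 + T) < η) ∧ ε ∈ Set.Ioi (0:ℝ) :=
    ((hev1.and hev2).filter_mono nhdsWithin_le_nhds).and self_mem_nhdsWithin
  obtain ⟨ε, ⟨hεδ, hεη⟩, hεpos⟩ := h3.exists
  have hkey := key ε hεpos hεδ (x, t) ⟨hx, ht⟩
  simp only [] at hkey
  have hεpos' : (0:ℝ) < ε := hεpos
  have h4 : ε * (1 + t) ≤ ε * (1 + T) :=
    mul_le_mul_of_nonneg_left (by linarith only [ht.2]) hεpos'.le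
  linarith only [hkey, h4, hεη]
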